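/- Let f₀ : [0,T] → R^2 be C^2, λ₀ : [0,T] → R C^1, μ₋₁, μ₀ continuous, Δf₋₁ = f₀ − f₋₁, Δf₀ = f₁ − f₀ with f₋₁, f₁ : [0,T] → R^2 continuous, and f₁ C^1. Define e(t) = λ₀'(t)·f₀'(t) + λ₀(t)·f₀''(t) + μ₀(t)·Δf₀(t) − μ₋₁(t)·Δf₋₁(t). Suppose that for every s, t ∈ [0,T], det(e(t), f₁(s) − f₀(t)) = 0, and that for every s, the vectors Δf₀(s) and f₁'(s) are linearly independent. Then e(s) = 0 for all s ∈ [0,T]. -/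

import Mathlib

/-- 2×2 determinant of two vectors in ℝ². -/
def det2 (u v : ℝ × ℝ) : ℝ := u.1 * v.2 - u.2 * v.1

lemma det2_kernel_eq_zero {v a b : ℝ × ℝ} (h1 : det2 v a = 0) (h2 : det2 v b = 0)
    (hli : LinearIndependent ℝ ![a, b]) : v = 0 := by
  simp only [det2] at h1 h2
  rw [LinearIndependent.pair_iff] at hli
  by_contra hv
  have hd : a.1 * b.2 - a.2 * b.1 = 0 := by
    rcases Prod.mk.injEq v.1 v.2 0 0 ▸ hv with h
    by_cases h1v : v.1 = 0
    · have h2v : v.2 ≠ 0 := by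
        intro h2v; exact hv (Prod.ext h1v h2v)
      have : v.2 * (a.1 * b.2 - a.2 * b.1) = 0 := by linear_combination a.2 * h2 - b.2 * h1
      exact (mul_eq_zero.mp this).resolve_left h2v
    · have : v.1 * (a.1 * b.2 - a.2 * b.1) = 0 := by linear_combination a.1 * h2 - b.1 * h1
      exact (mul_eq_zero.mp this).resolve_left h1v
  have hA : b.2 = 0 ∧ -a.2 = 0 := by
    apply hli b.2 (-a.2)
    have : b.2 • a + (-a.2) • b = (b.2 * a.1 - a.2 * b.1, b.2 * a.2 - a.2 * b.2) := by
      simp [Prod.ext_iff, smul_eq_mul]; constructor <;> ring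
    rw [this, Prod.mk_eq_zero]
    constructor <;> nlinarith [hd]
  have hB : -b.1 = 0 ∧ a.1 = 0 := by
    apply hli (-b.1) a.1
    have : (-b.1) • a + a.1 • b = (-(b.1 * a.1) + a.1 * b.1, -(b.1 * a.2) + a.1 * b.2) := by
      simp [Prod.ext_iff, smul_eq_mul]
    rw [this, Prod.mk_eq_zero]
    constructor <;> nlinarith [hd]
  have ha : a = 0 := Prod.ext hB.2 (by simpa using hA.2)
  have := hli 1 0 (by simp [ha])
  exact one_ne_zero this.1

/-- If the equilibrium expression e pairs to zero (via det) with all vectors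
f₁(s) − f₀(t), and the discrete and smooth derivatives Δf₀(s), f₁'(s) are
linearly independent, then e vanishes identically. -/
theorem equilibrium_from_path_independence (T : ℝ) (hT : 0 < T)
    (f₀ fm f₁ : ℝ → ℝ × ℝ) (lam₀ μm μ₀ : ℝ → ℝ)
    (hf₀ : ContDiff ℝ 2 f₀) (hlam₀ : ContDiff ℝ 1 lam₀)
    (hμm : ContinuousOn μm (Set.Icc 0 T)) (hμ₀ : ContinuousOn μ₀ (Set.Icc 0 T))
    (hfm : ContinuousOn fm (Set.Icc 0 T)) (hf₁ : ContDiff ℝ 1 f₁)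
    (e : ℝ → ℝ × ℝ)
    (he : ∀ t, e t = deriv lam₀ t • deriv f₀ t + lam₀ t • deriv (deriv f₀) t
      + μ₀ t • (f₁ t - f₀ t) - μm t • (f₀ t - fm t))
    (hdet : ∀ s ∈ Set.Icc (0:ℝ) T, ∀ t ∈ Set.Icc (0:ℝ) T,
      det2 (e t) (f₁ s - f₀ t) = 0)
    (hli : ∀ s ∈ Set.Icc (0:ℝ) T,
      LinearIndependent ℝ ![f₁ s - f₀ s, deriv f₁ s]) :
    ∀ s ∈ Set.Icc (0:ℝ) T, e s = 0 := by
  intro s hs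
  -- first relation: det2 (e s) (f₁ s - f₀ s) = 0
  have h1 : det2 (e s) (f₁ s - f₀ s) = 0 := hdet s hs s hs
  -- second relation by differentiating in the first slot
  set g : ℝ → ℝ := fun u => (e s).1 * ((f₁ u).2 - (f₀ s).2) - (e s).2 * ((f₁ u).1 - (f₀ s).1)
    with hgdef
  have hg0 : ∀ u ∈ Set.Icc (0:ℝ) T, g u = 0 := by
    intro u hu
    have := hdet u hu s hs
    simpa [det2, hgdef] using this
  have hF : HasDerivAt f₁ (deriv f₁ s) s :=
    ((hf₁.differentiable one_ne_zero) s).hasDerivAt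
  have hfst : HasDerivAt (fun u => (f₁ u).1) (deriv f₁ s).1 s := by
    simpa using hF.hasFDerivAt.fst.hasDerivAt
  have hsnd : HasDerivAt (fun u => (f₁ u).2) (deriv f₁ s).2 s := by
    simpa using hF.hasFDerivAt.snd.hasDerivAt
  set D : ℝ := (e s).1 * (deriv f₁ s).2 - (e s).2 * (deriv f₁ s).1 with hD
  have hg : HasDerivAt g D s := by
    have h2' := ((hsnd.sub_const (f₀ s).2).const_mul ((e s).1))
    have h1' := ((hfst.sub_const (f₀ s).1).const_mul ((e s).2))
    exact h2'.sub h1'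
  have hgW : HasDerivWithinAt (fun _ : ℝ => (0:ℝ)) D (Set.Icc 0 T) s :=
    (hg.hasDerivWithinAt).congr (fun u hu => (hg0 u hu).symm) (hg0 s hs).symm
  have hud : UniqueDiffWithinAt ℝ (Set.Icc (0:ℝ) T) s := uniqueDiffOn_Icc hT s hs
  have hD0 : D = 0 := by
    have h0 : derivWithin (fun _ : ℝ => (0:ℝ)) (Set.Icc 0 T) s = 0 := by
      exact congrFun (derivWithin_const (Set.Icc 0 T) (0:ℝ)) s
    rw [← hgW.derivWithin hud, h0]
  have h2 : det2 (e s) (deriv f₁ s) = 0 := by simpa [det2, hD] using hD0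
  exact det2_kernel_eq_zero h1 h2 (hli s hs)
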